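/- arXiv:2203.06615 — 2 statements merged into one kernel-verified Lean document; each statement's English description precedes it below -/
import Mathlib

section
/- Let g(H) := Σ_{i=1}^{d+1} η_i · max_{j ∈ P_i} ‖H δ_j‖², where the η_i > 0 sum to 1, {P_i} is a finite partition of an index set indexing vectors δ_j ∈ ℝ^d, and H ranges over d×d matrices. Let γ := inf_{H ≠ 0} Σ_{i=1}^{d+1} η_i min_{j ∈ P_i} ‖Hδ_j‖²/‖H‖_F². Then g is 2γ-strongly convex with respect to the Frobenius norm; i.e., for all matrices H₁, H₂ and α ∈ [0,1], g(αH₁ + (1−α)H₂) ≤ α g(H₁) + (1−α) g(H₂) − γ α(1−α) ‖H₁ − H₂‖_F². -/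
open Matrix

private lemma inf'_div_const {ι : Type*} {s : Finset ι} (h : s.Nonempty) (f : ι → ℝ)
    (c : ℝ) (hc : 0 < c) : s.inf' h (fun j => f j / c) = s.inf' h f / c := by
  apply le_antisymm
  · obtain ⟨j, hj, hjeq⟩ := Finset.exists_mem_eq_inf' h f
    calc s.inf' h (fun j => f j / c) ≤ f j / c := Finset.inf'_le _ hj
      _ = s.inf' h f / c := by rw [hjeq]
  · apply Finset.le_inf'
    intro j hj
    exact div_le_div_of_nonneg_right (Finset.inf'_le _ hj) hc.le

/-- The regularizer `g(H) = Σ_i η_i max_{j ∈ P_i} ‖Hδ_j‖²` is `2γ`-strongly convex w.r.t.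
the Frobenius norm, where `γ = inf_{H ≠ 0} Σ_i η_i min_{j ∈ P_i} ‖Hδ_j‖²/‖H‖_F²`. -/
theorem stmt7 (d NN : ℕ) (δ : Fin NN → Fin d → ℝ) (hδ : ∀ j, δ j ≠ 0)
    (η : Fin (d + 1) → ℝ) (hη : ∀ i, 0 < η i) (hsum : ∑ i, η i = 1)
    (P : Fin (d + 1) → Finset (Fin NN)) (hne : ∀ i, (P i).Nonempty)
    (hdisj : ∀ i i', i ≠ i' → Disjoint (P i) (P i'))
    (hcover : ∀ j, ∃ i, j ∈ P i)
    (γ : ℝ)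
    (hγ : γ = ⨅ H : {H : Matrix (Fin d) (Fin d) ℝ // H ≠ 0},
      ∑ i, η i * (P i).inf' (hne i) (fun j =>
        (∑ k, ((H : Matrix (Fin d) (Fin d) ℝ) *ᵥ δ j) k ^ 2)
          / (∑ k, ∑ l, ((H : Matrix (Fin d) (Fin d) ℝ) k l) ^ 2)))
    (g : Matrix (Fin d) (Fin d) ℝ → ℝ)
    (hg : ∀ H, g H = ∑ i, η i * (P i).sup' (hne i) (fun j => ∑ k, (H *ᵥ δ j) k ^ 2)) :
    ∀ H1 H2 : Matrix (Fin d) (Fin d) ℝ, ∀ α : ℝ, 0 ≤ α → α ≤ 1 →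
      g (α • H1 + (1 - α) • H2) ≤ α * g H1 + (1 - α) * g H2
        - γ * (α * (1 - α)) * (∑ k, ∑ l, (H1 k l - H2 k l) ^ 2) := by
  intro H1 H2 α hα0 hα1
  set β := 1 - α with hβ
  have hβ0 : 0 ≤ β := by rw [hβ]; linarith
  set D : Matrix (Fin d) (Fin d) ℝ := H1 - H2 with hD
  set m : Fin NN → ℝ := fun j => ∑ k, (D *ᵥ δ j) k ^ 2 with hm
  set F : ℝ := ∑ k, ∑ l, (H1 k l - H2 k l) ^ 2 with hF
  have hFD : F = ∑ k, ∑ l, (D k l) ^ 2 := by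
    rw [hF]; simp [hD, Matrix.sub_apply]
  have hmnn : ∀ j, 0 ≤ m j := fun j => Finset.sum_nonneg fun k _ => sq_nonneg _
  -- quadratic identity
  have hq : ∀ j, (∑ k, ((α • H1 + β • H2) *ᵥ δ j) k ^ 2)
      = α * (∑ k, (H1 *ᵥ δ j) k ^ 2) + β * (∑ k, (H2 *ᵥ δ j) k ^ 2) - α * β * m j := by
    intro j
    have hmv : ∀ k, ((α • H1 + β • H2) *ᵥ δ j) k
        = α * (H1 *ᵥ δ j) k + β * (H2 *ᵥ δ j) k := by
      intro k
      simp [Matrix.add_mulVec, Matrix.smul_mulVec]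
    have hDk : ∀ k, (D *ᵥ δ j) k = (H1 *ᵥ δ j) k - (H2 *ᵥ δ j) k := by
      intro k; rw [hD]; simp [Matrix.sub_mulVec]
    simp only [hm, hmv, hDk, Finset.mul_sum]
    rw [← Finset.sum_add_distrib, ← Finset.sum_sub_distrib]
    apply Finset.sum_congr rfl
    intro k _
    rw [hβ]
    ring
  have hMnn : ∀ i, 0 ≤ (P i).inf' (hne i) m :=
    fun i => Finset.le_inf' _ _ fun j hj => hmnn j
  -- key: γ * F ≤ ∑ η * inf' m
  have hkey : γ * F ≤ ∑ i, η i * (P i).inf' (hne i) m := by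
    by_cases hD0 : D = 0
    · have hF0 : F = 0 := by simp [hFD, hD0]
      rw [hF0, mul_zero]
      exact Finset.sum_nonneg fun i _ => mul_nonneg (hη i).le (hMnn i)
    · have hFpos : 0 < F := by
        have hex : ∃ k l, D k l ≠ 0 := by
          by_contra h
          push_neg at h
          exact hD0 (by ext k l; simp [h])
        obtain ⟨k, l, hkl⟩ := hex
        rw [hFD]
        apply Finset.sum_pos'
          (fun k _ => Finset.sum_nonneg fun l _ => sq_nonneg _)
        exact ⟨k, Finset.mem_univ k, Finset.sum_pos'
          (fun l _ => sq_nonneg _) ⟨l, Finset.mem_univ l, by positivity⟩⟩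
      have hbdd : BddBelow (Set.range fun H : {H : Matrix (Fin d) (Fin d) ℝ // H ≠ 0} =>
          ∑ i, η i * (P i).inf' (hne i) (fun j =>
            (∑ k, ((H : Matrix (Fin d) (Fin d) ℝ) *ᵥ δ j) k ^ 2)
              / (∑ k, ∑ l, ((H : Matrix (Fin d) (Fin d) ℝ) k l) ^ 2))) := by
        refine ⟨0, ?_⟩
        rintro x ⟨H, rfl⟩
        apply Finset.sum_nonneg
        intro i _
        apply mul_nonneg (hη i).le
        exact Finset.le_inf' _ _ fun j hj => by positivity
      have hle : γ ≤ ∑ i, η i * (P i).inf' (hne i) (fun j => m j / F) := by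
        rw [hγ, hm, hFD]
        exact ciInf_le hbdd ⟨D, hD0⟩
      have hle2 : γ ≤ (∑ i, η i * (P i).inf' (hne i) m) / F := by
        refine le_trans hle (le_of_eq ?_)
        rw [Finset.sum_div]
        apply Finset.sum_congr rfl
        intro i _
        rw [inf'_div_const (hne i) m F hFpos, mul_div_assoc]
      calc γ * F ≤ ((∑ i, η i * (P i).inf' (hne i) m) / F) * F :=
            mul_le_mul_of_nonneg_right hle2 hFpos.le
        _ = ∑ i, η i * (P i).inf' (hne i) m := div_mul_cancel₀ _ hFpos.ne'
  -- per-partition sup bound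
  have hsup : ∀ i, (P i).sup' (hne i) (fun j => ∑ k, ((α • H1 + β • H2) *ᵥ δ j) k ^ 2)
      ≤ α * (P i).sup' (hne i) (fun j => ∑ k, (H1 *ᵥ δ j) k ^ 2)
        + β * (P i).sup' (hne i) (fun j => ∑ k, (H2 *ᵥ δ j) k ^ 2)
        - α * β * (P i).inf' (hne i) m := by
    intro i
    apply Finset.sup'_le
    intro j hj
    rw [hq j]
    have h1 := Finset.le_sup' (fun j => ∑ k, (H1 *ᵥ δ j) k ^ 2) hj
    have h2 := Finset.le_sup' (fun j => ∑ k, (H2 *ᵥ δ j) k ^ 2) hj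
    have h3 := Finset.inf'_le (s := P i) m hj
    have := mul_le_mul_of_nonneg_left h1 hα0
    have := mul_le_mul_of_nonneg_left h2 hβ0
    have := mul_le_mul_of_nonneg_left h3 (mul_nonneg hα0 hβ0)
    linarith
  rw [hg, hg, hg]
  calc (∑ i, η i * (P i).sup' (hne i) (fun j => ∑ k, ((α • H1 + β • H2) *ᵥ δ j) k ^ 2))
      ≤ ∑ i, η i * (α * (P i).sup' (hne i) (fun j => ∑ k, (H1 *ᵥ δ j) k ^ 2)
          + β * (P i).sup' (hne i) (fun j => ∑ k, (H2 *ᵥ δ j) k ^ 2)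
          - α * β * (P i).inf' (hne i) m) :=
        Finset.sum_le_sum fun i _ => mul_le_mul_of_nonneg_left (hsup i) (hη i).le
    _ = α * (∑ i, η i * (P i).sup' (hne i) (fun j => ∑ k, (H1 *ᵥ δ j) k ^ 2))
        + β * (∑ i, η i * (P i).sup' (hne i) (fun j => ∑ k, (H2 *ᵥ δ j) k ^ 2))
        - α * β * (∑ i, η i * (P i).inf' (hne i) m) := by
        simp only [Finset.mul_sum]
        rw [← Finset.sum_add_distrib, ← Finset.sum_sub_distrib]
        apply Finset.sum_congr rfl
        intro i _
        ring
    _ ≤ α * (∑ i, η i * (P i).sup' (hne i) (fun j => ∑ k, (H1 *ᵥ δ j) k ^ 2))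
        + β * (∑ i, η i * (P i).sup' (hne i) (fun j => ∑ k, (H2 *ᵥ δ j) k ^ 2))
        - γ * (α * β) * F := by
        have h := mul_le_mul_of_nonneg_left hkey (mul_nonneg hα0 hβ0)
        nlinarith [h]
end

section
/- If ε > 0 and U is an ε-net of the unit sphere S^{d_y−1}, V an ε-net of S^{d_x−1}, and L an ε₀-net of [−r, r] with suitable radii, then the set of matrices Σᵢ σᵢ uᵢ vᵢ^T with σᵢ ∈ L, uᵢ ∈ U, vᵢ ∈ V forms a γ-cover in operator norm of the set of matrices H with all singular values at most r, with γ ≤ ε₀ + d_m · r · (2ε), where d_m = min{d_x, d_y}. More basically: if H = UΣV^T and H̃ = ŨΣ̃Ṽ^T are SVDs, then ‖H − H̃‖_op ≤ max_i |σ_i − σ̃_i| + d_m · (max_i σ̃_i) · max_i(‖u_i − ũ_i‖ + ‖v_i − ṽ_i‖). -/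
open Matrix

/-- The (spectral) operator norm of a real matrix, via its action on Euclidean space. -/
noncomputable def opNorm {m n : ℕ} (A : Matrix (Fin m) (Fin n) ℝ) : ℝ :=
  ‖LinearMap.toContinuousLinearMap (Matrix.toEuclideanLin A)‖

lemma opNorm_add_le' {m n : ℕ} (A B : Matrix (Fin m) (Fin n) ℝ) :
    opNorm (A + B) ≤ opNorm A + opNorm B := by
  unfold opNorm
  rw [map_add, map_add]
  exact norm_add_le _ _

lemma opNorm_sum_le' {m n N : ℕ} (f : Fin N → Matrix (Fin m) (Fin n) ℝ) :
    opNorm (∑ k, f k) ≤ ∑ k, opNorm (f k) := by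
  unfold opNorm
  rw [map_sum, map_sum]
  exact norm_sum_le _ _

lemma euc_sum_apply {d m : ℕ} (f : Fin m → EuclideanSpace ℝ (Fin d)) (i : Fin d) :
    (∑ k, f k) i = ∑ k, f k i :=
  by rw [WithLp.ofLp_sum, Finset.sum_apply]

lemma toEuc_sum_apply {dx dy dm : ℕ} (c : Fin dm → ℝ)
    (w : Fin dm → EuclideanSpace ℝ (Fin dy)) (z : Fin dm → EuclideanSpace ℝ (Fin dx))
    (x : EuclideanSpace ℝ (Fin dx)) :
    Matrix.toEuclideanLin (Matrix.of fun i j => ∑ k, c k * w k i * z k j) x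
      = ∑ k, (c k * inner ℝ (z k) x) • w k := by
  ext i
  rw [euc_sum_apply]
  simp only [Matrix.toEuclideanLin_apply, Matrix.mulVec, dotProduct, Matrix.of_apply,
    WithLp.ofLp_toLp, PiLp.toLp_apply, PiLp.smul_apply,
    PiLp.inner_apply, RCLike.inner_apply, conj_trivial, smul_eq_mul, Finset.sum_mul,
    Finset.mul_sum]
  rw [Finset.sum_comm]
  apply Finset.sum_congr rfl; intro k _
  apply Finset.sum_congr rfl; intro j _; ring

lemma toEuc_rankOne_apply {dx dy : ℕ} (c : ℝ)
    (w : EuclideanSpace ℝ (Fin dy)) (z : EuclideanSpace ℝ (Fin dx))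
    (x : EuclideanSpace ℝ (Fin dx)) :
    Matrix.toEuclideanLin (Matrix.of fun i j => c * w i * z j) x
      = (c * inner ℝ z x) • w := by
  ext i
  simp only [Matrix.toEuclideanLin_apply, Matrix.mulVec, dotProduct, Matrix.of_apply,
    WithLp.ofLp_toLp, PiLp.toLp_apply, PiLp.smul_apply,
    PiLp.inner_apply, RCLike.inner_apply, conj_trivial, smul_eq_mul, Finset.sum_mul,
    Finset.mul_sum]
  apply Finset.sum_congr rfl; intro j _; ring

lemma opNorm_rankOne_le {dx dy : ℕ} (c : ℝ)
    (w : EuclideanSpace ℝ (Fin dy)) (z : EuclideanSpace ℝ (Fin dx)) :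
    opNorm (Matrix.of fun i j => c * w i * z j) ≤ |c| * ‖w‖ * ‖z‖ := by
  apply ContinuousLinearMap.opNorm_le_bound _ (by positivity)
  intro x
  rw [LinearMap.coe_toContinuousLinearMap', toEuc_rankOne_apply, norm_smul]
  calc ‖c * inner ℝ z x‖ * ‖w‖ ≤ (|c| * (‖z‖ * ‖x‖)) * ‖w‖ := by
        apply mul_le_mul_of_nonneg_right _ (norm_nonneg w)
        rw [Real.norm_eq_abs, abs_mul]
        exact mul_le_mul_of_nonneg_left (abs_real_inner_le_norm z x) (abs_nonneg c)
    _ = |c| * ‖w‖ * ‖z‖ * ‖x‖ := by ring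

lemma opNorm_orthsum_le {dx dy dm : ℕ} [NeZero dm] (c : Fin dm → ℝ)
    (w : Fin dm → EuclideanSpace ℝ (Fin dy)) (z : Fin dm → EuclideanSpace ℝ (Fin dx))
    (hw : Orthonormal ℝ w) (hz : Orthonormal ℝ z) :
    opNorm (Matrix.of fun i j => ∑ k, c k * w k i * z k j) ≤ ⨆ k, |c k| := by
  have hbdd : BddAbove (Set.range fun k => |c k|) := Set.Finite.bddAbove (Set.finite_range _)
  have hC0 : 0 ≤ ⨆ k, |c k| :=
    le_trans (abs_nonneg (c (Classical.arbitrary _))) (le_ciSup hbdd _)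
  apply ContinuousLinearMap.opNorm_le_bound _ hC0
  intro x
  rw [LinearMap.coe_toContinuousLinearMap', toEuc_sum_apply]
  set C := ⨆ k, |c k| with hCdef
  have hsq : ‖∑ k, (c k * inner ℝ (z k) x) • w k‖ ^ 2
      = ∑ k, (c k * inner ℝ (z k) x) ^ 2 := by
    rw [← real_inner_self_eq_norm_sq, hw.inner_sum]
    simp [sq]
  have hle : ‖∑ k, (c k * inner ℝ (z k) x) • w k‖ ^ 2 ≤ (C * ‖x‖) ^ 2 := by
    rw [hsq]
    calc ∑ k, (c k * inner ℝ (z k) x) ^ 2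
        ≤ ∑ k, C ^ 2 * (inner ℝ (z k) x : ℝ) ^ 2 := by
          apply Finset.sum_le_sum
          intro k _
          rw [mul_pow]
          apply mul_le_mul_of_nonneg_right _ (sq_nonneg _)
          calc c k ^ 2 = |c k| ^ 2 := (sq_abs _).symm
            _ ≤ C ^ 2 := pow_le_pow_left₀ (abs_nonneg _) (le_ciSup hbdd k) 2
      _ = C ^ 2 * ∑ k, (inner ℝ (z k) x : ℝ) ^ 2 := by rw [Finset.mul_sum]
      _ ≤ C ^ 2 * ‖x‖ ^ 2 := by
          apply mul_le_mul_of_nonneg_left _ (sq_nonneg C)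
          have := hz.sum_inner_products_le (s := Finset.univ) x
          simpa [Real.norm_eq_abs, sq_abs] using this
      _ = (C * ‖x‖) ^ 2 := by ring
  have h2 := Real.sqrt_le_sqrt hle
  rwa [Real.sqrt_sq (norm_nonneg _), Real.sqrt_sq (by positivity)] at h2

/-- SVD perturbation bound: if `H = Σ σᵢ uᵢvᵢᵀ` and `H̃ = Σ σ̃ᵢ ũᵢṽᵢᵀ` with orthonormal
singular-vector families, then
`‖H − H̃‖_op ≤ maxᵢ|σᵢ − σ̃ᵢ| + d_m·(maxᵢ σ̃ᵢ)·maxᵢ(‖uᵢ − ũᵢ‖ + ‖vᵢ − ṽᵢ‖)`. -/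
theorem stmt18 (dx dy dm : ℕ) [NeZero dm] (hdm : dm = min dx dy)
    (σ σt : Fin dm → ℝ) (hσ : ∀ k, 0 ≤ σ k) (hσt : ∀ k, 0 ≤ σt k)
    (u ut : Fin dm → EuclideanSpace ℝ (Fin dy))
    (v vt : Fin dm → EuclideanSpace ℝ (Fin dx))
    (hu : Orthonormal ℝ u) (hut : Orthonormal ℝ ut)
    (hv : Orthonormal ℝ v) (hvt : Orthonormal ℝ vt)
    (H Ht : Matrix (Fin dy) (Fin dx) ℝ)
    (hH : H = Matrix.of fun i j => ∑ k, σ k * u k i * v k j)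
    (hHt : Ht = Matrix.of fun i j => ∑ k, σt k * ut k i * vt k j) :
    opNorm (H - Ht)
      ≤ (⨆ k, |σ k - σt k|)
        + (dm : ℝ) * (⨆ k, σt k) * (⨆ k, (‖u k - ut k‖ + ‖v k - vt k‖)) := by
  subst hH hHt
  set M1 := Matrix.of fun i j => ∑ k, (σ k - σt k) * u k i * v k j with hM1
  set M2 : Fin dm → Matrix (Fin dy) (Fin dx) ℝ :=
    fun k => Matrix.of fun i j => σt k * (u k - ut k) i * v k j with hM2
  set M3 : Fin dm → Matrix (Fin dy) (Fin dx) ℝ :=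
    fun k => Matrix.of fun i j => σt k * ut k i * (v k - vt k) j with hM3
  have hsplit :
      (Matrix.of fun i j => ∑ k, σ k * u k i * v k j)
        - (Matrix.of fun i j => ∑ k, σt k * ut k i * vt k j)
      = M1 + ((∑ k, M2 k) + (∑ k, M3 k)) := by
    ext i j
    simp only [hM1, hM2, hM3, Matrix.sub_apply, Matrix.add_apply, Matrix.of_apply,
      Matrix.sum_apply, PiLp.sub_apply, ← Finset.sum_sub_distrib, ← Finset.sum_add_distrib]
    apply Finset.sum_congr rfl; intro k _; ring
  -- suprema facts
  have hbddS : BddAbove (Set.range fun k => σt k) := Set.Finite.bddAbove (Set.finite_range _)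
  have hbddT : BddAbove (Set.range fun k => ‖u k - ut k‖ + ‖v k - vt k‖) :=
    Set.Finite.bddAbove (Set.finite_range _)
  set S := ⨆ k, σt k with hSdef
  set T := ⨆ k, (‖u k - ut k‖ + ‖v k - vt k‖) with hTdef
  have hS0 : 0 ≤ S := le_trans (hσt (Classical.arbitrary _)) (le_ciSup hbddS _)
  -- per-index bounds
  have hb2 : ∀ k, opNorm (M2 k) ≤ σt k * ‖u k - ut k‖ := by
    intro k
    have := opNorm_rankOne_le (σt k) (u k - ut k) (v k)
    rwa [abs_of_nonneg (hσt k), hv.1 k, mul_one] at this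
  have hb3 : ∀ k, opNorm (M3 k) ≤ σt k * ‖v k - vt k‖ := by
    intro k
    have := opNorm_rankOne_le (σt k) (ut k) (v k - vt k)
    rwa [abs_of_nonneg (hσt k), hut.1 k, mul_one] at this
  have hsumbound : (∑ k, σt k * ‖u k - ut k‖) + (∑ k, σt k * ‖v k - vt k‖)
      ≤ (dm : ℝ) * S * T := by
    rw [← Finset.sum_add_distrib]
    calc ∑ k, (σt k * ‖u k - ut k‖ + σt k * ‖v k - vt k‖)
        = ∑ k, σt k * (‖u k - ut k‖ + ‖v k - vt k‖) := by
          apply Finset.sum_congr rfl; intro k _; ring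
      _ ≤ ∑ _k : Fin dm, S * T := by
          apply Finset.sum_le_sum
          intro k _
          exact mul_le_mul (le_ciSup hbddS k) (le_ciSup hbddT k)
            (by positivity) hS0
      _ = (dm : ℝ) * S * T := by
          rw [Finset.sum_const, Finset.card_univ, Fintype.card_fin, nsmul_eq_mul, mul_assoc]
  rw [hsplit]
  calc opNorm (M1 + ((∑ k, M2 k) + (∑ k, M3 k)))
      ≤ opNorm M1 + opNorm ((∑ k, M2 k) + (∑ k, M3 k)) := opNorm_add_le' _ _
    _ ≤ opNorm M1 + (opNorm (∑ k, M2 k) + opNorm (∑ k, M3 k)) := by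
        exact add_le_add_right (opNorm_add_le' _ _) _
    _ ≤ (⨆ k, |σ k - σt k|)
        + ((∑ k, σt k * ‖u k - ut k‖) + (∑ k, σt k * ‖v k - vt k‖)) := by
        apply add_le_add
        · exact opNorm_orthsum_le _ _ _ hu hv
        · apply add_le_add
          · exact le_trans (opNorm_sum_le' _) (Finset.sum_le_sum fun k _ => hb2 k)
          · exact le_trans (opNorm_sum_le' _) (Finset.sum_le_sum fun k _ => hb3 k)
    _ ≤ (⨆ k, |σ k - σt k|) + (dm : ℝ) * S * T := add_le_add_right hsumbound _
end
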